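/- Let S be a (not necessarily commutative) unital ring, f, i, D, I ∈ S, and set M = T(f,i) = ![![f, 0], ![i, f]] and P = T(D,I) = ![![D, 0], ![I, D]] in Matrix (Fin 2) (Fin 2) S. Then for every natural number n, the n-th iterated adjoint action satisfies (ad M)^[n] P = ![![(ad f)^[n] D, 0], ![(ad f)^[n] I − ∑_{l=0}^{n−1} (n.choose (l+1)) • ⁅(ad f)^[n−1−l] D, (ad f)^[l] i⁆, (ad f)^[n] D]], where (ad a)^[k] denotes the k-th iterate of x ↦ ⁅a, x⁆ and n.choose (l+1) = n!/((n−1−l)!·(l+1)!) is a binomial coefficient. (This is the formula for ad(f,i)^n(D_R, I_R) from the proof of the main theorem, expressed in the matrix model.) -/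

import Mathlib

def T {S : Type*} [Ring S] (a b : S) : Matrix (Fin 2) (Fin 2) S :=
  ![![a, 0], ![b, a]]

lemma bracket_T {S : Type*} [Ring S] (f i a b : S) :
    ⁅T f i, T a b⁆ = T ⁅f, a⁆ (⁅f, b⁆ - ⁅a, i⁆) := by
  rw [Ring.lie_def]
  ext x y
  fin_cases x <;> fin_cases y <;>
    simp [Matrix.mul_apply, Fin.sum_univ_two] <;> simp [T, Ring.lie_def] <;> noncomm_ring

section

attribute [local instance 100] LieRing.ofAssociativeRing

lemma lie_nsmul' {S : Type*} [Ring S] (x y : S) (k : ℕ) : ⁅x, k • y⁆ = k • ⁅x, y⁆ := by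
  induction k with
  | zero => simp
  | succ k ih => rw [succ_nsmul, succ_nsmul, lie_add, ih]

lemma lie_fsum {S : Type*} [Ring S] (x : S) (s : Finset ℕ) (h : ℕ → S) :
    ⁅x, ∑ l ∈ s, h l⁆ = ∑ l ∈ s, ⁅x, h l⁆ :=
  map_sum (AddMonoidHom.mk' (fun y : S => ⁅x, y⁆) (lie_add x)) h s

lemma key {S : Type*} [Ring S] (f i D I : S) (n : ℕ) :
    ⁅f, (fun x => ⁅f, x⁆)^[n] I -
        ∑ l ∈ Finset.range n,
          (n.choose (l + 1)) • ⁅(fun x => ⁅f, x⁆)^[n - 1 - l] D, (fun x => ⁅f, x⁆)^[l] i⁆⁆ -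
      ⁅(fun x => ⁅f, x⁆)^[n] D, i⁆ =
    (fun x => ⁅f, x⁆)^[n + 1] I -
      ∑ l ∈ Finset.range (n + 1),
        ((n + 1).choose (l + 1)) •
          ⁅(fun x => ⁅f, x⁆)^[n + 1 - 1 - l] D, (fun x => ⁅f, x⁆)^[l] i⁆ := by
  set g := fun x : S => ⁅f, x⁆ with hg
  have hit : g^[n + 1] I = ⁅f, g^[n] I⁆ := by
    rw [Function.iterate_succ_apply']
  simp only [Nat.add_sub_cancel] at *
  -- RHS sum manipulation
  have pascal : ∀ l, (n + 1).choose (l + 1) = n.choose l + n.choose (l + 1) := fun l =>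
    Nat.choose_succ_succ n l
  have hRHS :
      (∑ l ∈ Finset.range (n + 1),
          ((n + 1).choose (l + 1)) • ⁅g^[n - l] D, g^[l] i⁆) =
        (∑ l ∈ Finset.range n, (n.choose (l + 1)) • ⁅g^[n - l] D, g^[l] i⁆) +
          ((∑ l ∈ Finset.range n, (n.choose (l + 1)) • ⁅g^[n - 1 - l] D, g^[l + 1] i⁆) +
            ⁅g^[n] D, i⁆) := by
    have h1 : (∑ l ∈ Finset.range (n + 1),
          ((n + 1).choose (l + 1)) • ⁅g^[n - l] D, g^[l] i⁆) =
        (∑ l ∈ Finset.range (n + 1), (n.choose l) • ⁅g^[n - l] D, g^[l] i⁆) +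
          (∑ l ∈ Finset.range (n + 1), (n.choose (l + 1)) • ⁅g^[n - l] D, g^[l] i⁆) := by
      rw [← Finset.sum_add_distrib]
      refine Finset.sum_congr rfl fun l _ => ?_
      rw [pascal l, add_smul]
    have h2 : (∑ l ∈ Finset.range (n + 1), (n.choose (l + 1)) • ⁅g^[n - l] D, g^[l] i⁆) =
        ∑ l ∈ Finset.range n, (n.choose (l + 1)) • ⁅g^[n - l] D, g^[l] i⁆ := by
      rw [Finset.sum_range_succ, Nat.choose_succ_self, zero_smul, add_zero]
    have h3 : (∑ l ∈ Finset.range (n + 1), (n.choose l) • ⁅g^[n - l] D, g^[l] i⁆) =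
        (∑ l ∈ Finset.range n, (n.choose (l + 1)) • ⁅g^[n - 1 - l] D, g^[l + 1] i⁆) +
          ⁅g^[n] D, i⁆ := by
      rw [Finset.sum_range_succ']
      simp only [Nat.choose_zero_right, one_smul, Nat.sub_zero, Function.iterate_zero, id_eq]
      congr 1
      refine Finset.sum_congr rfl fun l _ => ?_
      rw [show n - (l + 1) = n - 1 - l from by omega]
    rw [h1, h2, h3]
    abel
  -- LHS
  rw [lie_sub, hRHS, ← hit]
  have hLHS : ⁅f, ∑ l ∈ Finset.range n,
        (n.choose (l + 1)) • ⁅g^[n - 1 - l] D, g^[l] i⁆⁆ =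
      (∑ l ∈ Finset.range n, (n.choose (l + 1)) • ⁅g^[n - l] D, g^[l] i⁆) +
        (∑ l ∈ Finset.range n, (n.choose (l + 1)) • ⁅g^[n - 1 - l] D, g^[l + 1] i⁆) := by
    rw [lie_fsum, ← Finset.sum_add_distrib]
    refine Finset.sum_congr rfl fun l hl => ?_
    have hl' : l < n := Finset.mem_range.mp hl
    have e1 : g^[n - l] D = ⁅f, g^[n - 1 - l] D⁆ := by
      have : n - l = (n - 1 - l) + 1 := by omega
      rw [this, Function.iterate_succ_apply']
    have e2 : g^[l + 1] i = ⁅f, g^[l] i⁆ := by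
      rw [Function.iterate_succ_apply']
    rw [lie_nsmul', e1, e2, leibniz_lie, smul_add]
  rw [hLHS]
  abel

end

/-- The iterated adjoint action in the matrix model: with `M = T f i` and
`P = T D I`, for every `n` one has
`(ad M)^[n] P = T ((ad f)^[n] D) ((ad f)^[n] I - ∑_{l=0}^{n-1} (n.choose (l+1)) • ⁅(ad f)^[n-1-l] D, (ad f)^[l] i⁆)`. -/
theorem stmt6 {S : Type*} [Ring S] (f i D I : S) (n : ℕ) :
    (fun X => ⁅T f i, X⁆)^[n] (T D I) =
      T ((fun x => ⁅f, x⁆)^[n] D)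
        ((fun x => ⁅f, x⁆)^[n] I -
          ∑ l ∈ Finset.range n,
            (n.choose (l + 1)) • ⁅(fun x => ⁅f, x⁆)^[n - 1 - l] D, (fun x => ⁅f, x⁆)^[l] i⁆) := by
  induction n with
  | zero => simp [Function.iterate_zero]
  | succ n ih =>
    rw [Function.iterate_succ_apply', ih, bracket_T]
    rw [show ⁅f, (fun x => ⁅f, x⁆)^[n] D⁆ = (fun x => ⁅f, x⁆)^[n+1] D from
      (Function.iterate_succ_apply' _ n D).symm]
    rw [key f i D I n]
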